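/- arXiv:nlin/0206049 — 2 statements merged into one kernel-verified Lean document; each statement's English description precedes it below -/
import Mathlib

section
/- Let N ≥ 4, let f_1,...,f_N be commuting indeterminates with indices modulo N, and define the Poisson bracket on the polynomial ring by {F, G} = Σ_{m,n=1}^{N} (−δ_{m+1,n} + δ_{m−1,n}) (∂F/∂f_m)(∂G/∂f_n), where the Kronecker deltas are evaluated modulo N. With β_1,...,β_{N−2} real constants, F_m(λ) = ∏_{n=m}^{N−2} (1 + (λ + β_n) ∂²/∂f_n ∂f_{n+1}) applied to f_m ⋯ f_{N−1} for 1 ≤ m ≤ N−2, and F_{N−1}(λ) = f_{N−1}, the following hold for all 0 ≤ n ≤ N−3 and all parameters λ, μ: {F_{n+1}(λ), F_{n+1}(μ)} = 0, {F_{n+2}(λ), F_{n+2}(μ)} = 0, and (λ − μ) {F_{n+1}(λ), F_{n+2}(μ)} = F_{n+2}(λ) F_{n+1}(μ) − F_{n+1}(λ) F_{n+2}(μ). -/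
/-- The Veselov–Shabat operator 1 + (λ + β_n) ∂²/∂f_n ∂f_{n+1}, for a real parameter λ,
on the polynomial ring in the variables f_1, f_2, … over ℝ. -/
noncomputable def vsOpR (lam : ℝ) (β : ℕ → ℝ) (n : ℕ) (p : MvPolynomial ℕ ℝ) :
    MvPolynomial ℕ ℝ :=
  p + MvPolynomial.C (lam + β n) *
      MvPolynomial.pderiv n (MvPolynomial.pderiv (n + 1) p)

/-- F_m(λ) = ∏_{n=m}^{N−2} (1 + (λ + β_n) ∂²/∂f_n ∂f_{n+1}) (f_m f_{m+1} ⋯ f_{N−1});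
for m = N−1 this is just f_{N−1}. -/
noncomputable def vsFR (lam : ℝ) (β : ℕ → ℝ) (N m : ℕ) : MvPolynomial ℕ ℝ :=
  (List.range' m (N - 1 - m)).foldr (vsOpR lam β)
    (∏ n ∈ Finset.Icc m (N - 1), MvPolynomial.X n)

/-- The Poisson bracket {F, G} = Σ_{m,n=1}^{N} (−δ_{m+1,n} + δ_{m−1,n})
(∂F/∂f_m)(∂G/∂f_n), Kronecker deltas evaluated modulo N. -/
noncomputable def nyBracket (N : ℕ) (F G : MvPolynomial ℕ ℝ) : MvPolynomial ℕ ℝ :=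
  ∑ m ∈ Finset.Icc 1 N, ∑ n ∈ Finset.Icc 1 N,
    ((if (m + 1) % N = n % N then (-1 : MvPolynomial ℕ ℝ) else 0)
      + (if (n + 1) % N = m % N then 1 else 0))
      * MvPolynomial.pderiv m F * MvPolynomial.pderiv n G

namespace VSaux

open MvPolynomial

theorem pderiv_swap (i j : ℕ) (p : MvPolynomial ℕ ℝ) :
    pderiv i (pderiv j p) = pderiv j (pderiv i p) := by
  refine MvPolynomial.induction_on
    (motive := fun q => pderiv i (pderiv j q) = pderiv j (pderiv i q)) p
    (fun a => by simp) (fun q r hq hr => by simp [hq, hr]) (fun q s hq => ?_)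
  rcases eq_or_ne s i with rfl | hi
  · rcases eq_or_ne s j with rfl | hj
    · rfl
    · simp only [pderiv_mul, pderiv_X_self, pderiv_X_of_ne hj, map_add, pderiv_mul, hq,
        mul_zero, add_zero, mul_one, map_zero]
  · rcases eq_or_ne s j with rfl | hj
    · simp only [pderiv_mul, pderiv_X_self, pderiv_X_of_ne hi, map_add, pderiv_mul, hq,
        mul_zero, add_zero, mul_one, map_zero]
    · simp only [pderiv_mul, pderiv_X_of_ne hi, pderiv_X_of_ne hj, map_add, pderiv_mul, hq,
        mul_zero, add_zero, mul_one, map_zero]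

theorem vsOpR_def (lam : ℝ) (β : ℕ → ℝ) (n : ℕ) (p : MvPolynomial ℕ ℝ) :
    vsOpR lam β n p = p + C (lam + β n) * pderiv n (pderiv (n + 1) p) := rfl

theorem pderiv_vsOpR_zero {j : ℕ} {p : MvPolynomial ℕ ℝ} (lam : ℝ) (β : ℕ → ℝ) (n : ℕ)
    (h : pderiv j p = 0) : pderiv j (vsOpR lam β n p) = 0 := by
  unfold vsOpR
  rw [map_add, h, pderiv_C_mul, pderiv_swap j n, pderiv_swap j (n+1), h, map_zero, map_zero,
    mul_zero, add_zero]

theorem pderiv_foldr_zero (lam : ℝ) (β : ℕ → ℝ) (l : List ℕ) {j : ℕ} {p : MvPolynomial ℕ ℝ}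
    (h : pderiv j p = 0) : pderiv j (l.foldr (vsOpR lam β) p) = 0 := by
  induction l with
  | nil => exact h
  | cons n l ih => exact pderiv_vsOpR_zero lam β n ih

theorem pderiv_prod_X {j : ℕ} {s : Finset ℕ} (h : j ∉ s) :
    pderiv j (∏ n ∈ s, (X n : MvPolynomial ℕ ℝ)) = 0 := by
  classical
  induction s using Finset.induction_on with
  | empty => simp
  | insert a t hx ih =>
    rw [Finset.prod_insert hx, pderiv_mul, ih (fun hj => h (Finset.mem_insert_of_mem hj)),
      pderiv_X_of_ne (by rintro rfl; exact h (Finset.mem_insert_self a t)), zero_mul, mul_zero,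
      add_zero]

theorem vsFR_vars {j m : ℕ} (lam : ℝ) (β : ℕ → ℝ) (N : ℕ) (h : j < m ∨ N - 1 < j) :
    pderiv j (vsFR lam β N m) = 0 := by
  refine pderiv_foldr_zero lam β _ (pderiv_prod_X ?_)
  simp only [Finset.mem_Icc]
  omega

theorem vsFR_of_le (lam : ℝ) (β : ℕ → ℝ) (N m : ℕ) (h : N - 1 ≤ m) :
    vsFR lam β N m = ∏ n ∈ Finset.Icc m (N - 1), X n := by
  unfold vsFR
  have h0 : N - 1 - m = 0 := by omega
  rw [h0]
  rfl

theorem vsFR_top (lam : ℝ) (β : ℕ → ℝ) (N : ℕ) : vsFR lam β N (N - 1) = X (N - 1) := by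
  rw [vsFR_of_le lam β N (N-1) le_rfl, Finset.Icc_self, Finset.prod_singleton]

theorem vsFR_one (lam : ℝ) (β : ℕ → ℝ) (N m : ℕ) (hN : 1 ≤ N) (h : N ≤ m) :
    vsFR lam β N m = 1 := by
  rw [vsFR_of_le lam β N m (by omega), Finset.Icc_eq_empty (by omega), Finset.prod_empty]

theorem foldr_X_mul (lam : ℝ) (β : ℕ → ℝ) (m : ℕ) (l : List ℕ) (h : ∀ n ∈ l, m < n)
    (p : MvPolynomial ℕ ℝ) :
    l.foldr (vsOpR lam β) (X m * p) = X m * l.foldr (vsOpR lam β) p := by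
  induction l with
  | nil => rfl
  | cons n l ih =>
    have hn : m < n := h n List.mem_cons_self
    rw [List.foldr_cons, List.foldr_cons, ih (fun x hx => h x (List.mem_cons_of_mem n hx))]
    rw [vsOpR_def, vsOpR_def]
    have h1 : pderiv (n+1) (X m * l.foldr (vsOpR lam β) p)
        = X m * pderiv (n+1) (l.foldr (vsOpR lam β) p) := by
      rw [pderiv_mul, pderiv_X_of_ne (by omega : m ≠ n + 1), zero_mul, zero_add]
    have h2 : pderiv n (X m * pderiv (n+1) (l.foldr (vsOpR lam β) p))
        = X m * pderiv n (pderiv (n+1) (l.foldr (vsOpR lam β) p)) := by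
      rw [pderiv_mul, pderiv_X_of_ne (by omega : m ≠ n), zero_mul, zero_add]
    rw [h1, h2]
    ring

theorem vsFR_succ (lam : ℝ) (β : ℕ → ℝ) (N m : ℕ) (hm : m + 2 ≤ N) :
    vsFR lam β N m = vsOpR lam β m (X m * vsFR lam β N (m + 1)) := by
  unfold vsFR
  have h1 : N - 1 - m = (N - 1 - (m + 1)) + 1 := by omega
  rw [h1, List.range'_succ, List.foldr_cons]
  congr 1
  have h2 : Finset.Icc m (N - 1) = insert m (Finset.Icc (m + 1) (N - 1)) := by
    ext x
    simp only [Finset.mem_Icc, Finset.mem_insert]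
    omega
  rw [h2, Finset.prod_insert (by simp), foldr_X_mul]
  intro n hn
  have := List.mem_range'_1.mp hn
  omega

theorem vsFR_rec' (lam : ℝ) (β : ℕ → ℝ) (N m : ℕ) (hm : m + 2 ≤ N) :
    vsFR lam β N m = X m * vsFR lam β N (m + 1)
      + C (lam + β m) * pderiv (m + 1) (vsFR lam β N (m + 1)) := by
  rw [vsFR_succ lam β N m hm]
  unfold vsOpR
  have hz : pderiv m (vsFR lam β N (m + 1)) = 0 := vsFR_vars lam β N (by omega)
  have h1 : pderiv (m+1) (X m * vsFR lam β N (m+1)) = X m * pderiv (m+1) (vsFR lam β N (m+1)) := by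
    rw [pderiv_mul, pderiv_X_of_ne (by omega : m ≠ m + 1), zero_mul, zero_add]
  rw [h1, pderiv_mul, pderiv_X_self, pderiv_swap m (m+1), hz, map_zero, mul_zero, add_zero,
    one_mul]

theorem vsFR_pderiv_self (lam : ℝ) (β : ℕ → ℝ) (N m : ℕ) (hN : 1 ≤ N) (hm : m + 1 ≤ N) :
    pderiv m (vsFR lam β N m) = vsFR lam β N (m + 1) := by
  rcases le_or_gt (m + 2) N with h | h
  · rw [vsFR_rec' lam β N m h, map_add, pderiv_C_mul, pderiv_mul, pderiv_X_self, one_mul,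
      vsFR_vars lam β N (Or.inl (by omega) : m < m + 1 ∨ _), mul_zero, add_zero,
      pderiv_swap m (m+1), vsFR_vars lam β N (Or.inl (by omega) : m < m + 1 ∨ _), map_zero,
      mul_zero, add_zero]
  · have hm' : m = N - 1 := by omega
    subst hm'
    rw [vsFR_top, pderiv_X_self, vsFR_one lam β N _ hN (by omega)]

theorem vsFR_rec (lam : ℝ) (β : ℕ → ℝ) (N m : ℕ) (hm : m + 2 ≤ N) :
    vsFR lam β N m = X m * vsFR lam β N (m + 1) + C (lam + β m) * vsFR lam β N (m + 2) := by
  rw [vsFR_rec' lam β N m hm, vsFR_pderiv_self lam β N (m+1) (by omega) (by omega)]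

end VSaux
namespace VSaux
open MvPolynomial

theorem nyBracket_add_left (N : ℕ) (F₁ F₂ G : MvPolynomial ℕ ℝ) :
    nyBracket N (F₁ + F₂) G = nyBracket N F₁ G + nyBracket N F₂ G := by
  unfold nyBracket
  rw [← Finset.sum_add_distrib]
  refine Finset.sum_congr rfl fun m _ => ?_
  rw [← Finset.sum_add_distrib]
  refine Finset.sum_congr rfl fun n _ => ?_
  rw [map_add]
  ring

theorem nyBracket_add_right (N : ℕ) (F G₁ G₂ : MvPolynomial ℕ ℝ) :
    nyBracket N F (G₁ + G₂) = nyBracket N F G₁ + nyBracket N F G₂ := by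
  unfold nyBracket
  rw [← Finset.sum_add_distrib]
  refine Finset.sum_congr rfl fun m _ => ?_
  rw [← Finset.sum_add_distrib]
  refine Finset.sum_congr rfl fun n _ => ?_
  rw [map_add]
  ring

theorem nyBracket_C_mul_left (N : ℕ) (a : ℝ) (F G : MvPolynomial ℕ ℝ) :
    nyBracket N (C a * F) G = C a * nyBracket N F G := by
  unfold nyBracket
  rw [Finset.mul_sum]
  refine Finset.sum_congr rfl fun m _ => ?_
  rw [Finset.mul_sum]
  refine Finset.sum_congr rfl fun n _ => ?_
  rw [pderiv_C_mul]
  ring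

theorem nyBracket_C_mul_right (N : ℕ) (a : ℝ) (F G : MvPolynomial ℕ ℝ) :
    nyBracket N F (C a * G) = C a * nyBracket N F G := by
  unfold nyBracket
  rw [Finset.mul_sum]
  refine Finset.sum_congr rfl fun m _ => ?_
  rw [Finset.mul_sum]
  refine Finset.sum_congr rfl fun n _ => ?_
  rw [pderiv_C_mul]
  ring

theorem nyBracket_mul_left (N : ℕ) (P Q G : MvPolynomial ℕ ℝ) :
    nyBracket N (P * Q) G = P * nyBracket N Q G + Q * nyBracket N P G := by
  unfold nyBracket
  rw [Finset.mul_sum, Finset.mul_sum, ← Finset.sum_add_distrib]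
  refine Finset.sum_congr rfl fun m _ => ?_
  rw [Finset.mul_sum, Finset.mul_sum, ← Finset.sum_add_distrib]
  refine Finset.sum_congr rfl fun n _ => ?_
  rw [pderiv_mul]
  ring

theorem nyBracket_mul_right (N : ℕ) (F Q R : MvPolynomial ℕ ℝ) :
    nyBracket N F (Q * R) = Q * nyBracket N F R + R * nyBracket N F Q := by
  unfold nyBracket
  rw [Finset.mul_sum, Finset.mul_sum, ← Finset.sum_add_distrib]
  refine Finset.sum_congr rfl fun m _ => ?_
  rw [Finset.mul_sum, Finset.mul_sum, ← Finset.sum_add_distrib]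
  refine Finset.sum_congr rfl fun n _ => ?_
  rw [pderiv_mul]
  ring

theorem nyBracket_C_left (N : ℕ) (a : ℝ) (G : MvPolynomial ℕ ℝ) :
    nyBracket N (C a) G = 0 := by
  unfold nyBracket
  refine Finset.sum_eq_zero fun m _ => Finset.sum_eq_zero fun n _ => ?_
  rw [pderiv_C, mul_zero, zero_mul]

theorem nyBracket_C_right (N : ℕ) (a : ℝ) (F : MvPolynomial ℕ ℝ) :
    nyBracket N F (C a) = 0 := by
  unfold nyBracket
  refine Finset.sum_eq_zero fun m _ => Finset.sum_eq_zero fun n _ => ?_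
  rw [pderiv_C, mul_zero]

theorem nyBracket_swap (N : ℕ) (F G : MvPolynomial ℕ ℝ) :
    nyBracket N F G = - nyBracket N G F := by
  unfold nyBracket
  rw [Finset.sum_comm, ← Finset.sum_neg_distrib]
  refine Finset.sum_congr rfl fun i _ => ?_
  rw [← Finset.sum_neg_distrib]
  refine Finset.sum_congr rfl fun j _ => ?_
  split_ifs <;> ring

theorem nyBracket_self (N : ℕ) (P : MvPolynomial ℕ ℝ) : nyBracket N P P = 0 := by
  have h := nyBracket_swap N P P
  have h2 : (2 : MvPolynomial ℕ ℝ) * nyBracket N P P = 0 := by linear_combination h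
  rcases mul_eq_zero.mp h2 with h3 | h3
  · exact absurd h3 two_ne_zero
  · exact h3

theorem nyBracket_left_zero (N : ℕ) {F : MvPolynomial ℕ ℝ} (G : MvPolynomial ℕ ℝ)
    (h : ∀ j, pderiv j F = 0) : nyBracket N F G = 0 := by
  unfold nyBracket
  refine Finset.sum_eq_zero fun m _ => Finset.sum_eq_zero fun n _ => ?_
  rw [h m, mul_zero, zero_mul]

theorem nyBracket_right_zero (N : ℕ) (F : MvPolynomial ℕ ℝ) {G : MvPolynomial ℕ ℝ}
    (h : ∀ j, pderiv j G = 0) : nyBracket N F G = 0 := by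
  unfold nyBracket
  refine Finset.sum_eq_zero fun m _ => Finset.sum_eq_zero fun n _ => ?_
  rw [h n, mul_zero]

end VSaux
namespace VSaux
open MvPolynomial

theorem nyBracket_X_left {N : ℕ} (hN : 4 ≤ N) {k : ℕ} (hk1 : 1 ≤ k) (hk : k + 2 ≤ N)
    (G : MvPolynomial ℕ ℝ) (h0 : pderiv 0 G = 0) (hNG : pderiv N G = 0) :
    nyBracket N (X k) G = pderiv (k - 1) G - pderiv (k + 1) G := by
  unfold nyBracket
  rw [Finset.sum_eq_single k]
  rotate_left
  · intro b hb hbk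
    refine Finset.sum_eq_zero fun n _ => ?_
    rw [pderiv_X_of_ne (Ne.symm hbk), mul_zero, zero_mul]
  · intro hmem
    exact absurd (Finset.mem_Icc.mpr ⟨hk1, by omega⟩) hmem
  simp only [pderiv_X_self, mul_one, add_mul]
  rw [Finset.sum_add_distrib]
  have hA : ∑ n ∈ Finset.Icc 1 N,
      (if (k + 1) % N = n % N then (-1 : MvPolynomial ℕ ℝ) else 0) * pderiv n G
      = - pderiv (k + 1) G := by
    rw [Finset.sum_eq_single (k + 1)]
    · rw [if_pos rfl]
      ring
    · intro n hn hne
      have hn' := Finset.mem_Icc.mp hn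
      rw [if_neg, zero_mul]
      intro hmod
      have hk1' : (k + 1) % N = k + 1 := Nat.mod_eq_of_lt (by omega)
      rcases eq_or_lt_of_le hn'.2 with h | h
      · subst h
        rw [Nat.mod_self, hk1'] at hmod
        omega
      · rw [hk1', Nat.mod_eq_of_lt h] at hmod
        omega
    · intro hmem
      exact absurd (Finset.mem_Icc.mpr ⟨by omega, by omega⟩) hmem
  have hB : ∑ n ∈ Finset.Icc 1 N,
      (if (n + 1) % N = k % N then (1 : MvPolynomial ℕ ℝ) else 0) * pderiv n G
      = pderiv (k - 1) G := by
    have hkN : k % N = k := Nat.mod_eq_of_lt (by omega)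
    rcases le_or_gt 2 k with hk2 | hk2
    · rw [Finset.sum_eq_single (k - 1)]
      · rw [if_pos, one_mul]
        rw [hkN, Nat.sub_add_cancel hk1, Nat.mod_eq_of_lt (by omega)]
      · intro n hn hne
        have hn' := Finset.mem_Icc.mp hn
        rw [if_neg, zero_mul]
        intro hmod
        rw [hkN] at hmod
        rcases eq_or_lt_of_le hn'.2 with h | h
        · subst h
          rw [Nat.add_mod_left, Nat.mod_eq_of_lt (by omega)] at hmod
          omega
        · rcases eq_or_lt_of_le (show n + 1 ≤ N by omega) with h2 | h2
          · rw [h2, Nat.mod_self] at hmod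
            omega
          · rw [Nat.mod_eq_of_lt h2] at hmod
            omega
      · intro hmem
        exact absurd (Finset.mem_Icc.mpr ⟨by omega, by omega⟩) hmem
    · have hk0 : k - 1 = 0 := by omega
      rw [hk0, h0]
      refine Finset.sum_eq_zero fun n hn => ?_
      have hn' := Finset.mem_Icc.mp hn
      rcases eq_or_lt_of_le hn'.2 with h | h
      · subst h
        rw [hNG, mul_zero]
      · rw [if_neg, zero_mul]
        intro hmod
        rw [hkN] at hmod
        rcases eq_or_lt_of_le (show n + 1 ≤ N by omega) with h2 | h2
        · rw [h2, Nat.mod_self] at hmod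
          omega
        · rw [Nat.mod_eq_of_lt h2] at hmod
          omega
  rw [hA, hB]
  ring

end VSaux
namespace VSaux
open MvPolynomial

noncomputable def vsE (β : ℕ → ℝ) (N : ℕ) : ℕ → ℝ → ℝ → ℕ → MvPolynomial ℕ ℝ
  | 0, _, _, _ => 0
  | k+1, lam, mu, m =>
      -(vsFR lam β N (m+1) * vsFR mu β N (m+2)) - C (lam + β m) * vsE β N k mu lam (m+1)

theorem master {N : ℕ} (hN : 4 ≤ N) (β : ℕ → ℝ) :
    ∀ k m lam mu, 1 ≤ m → N - 1 - m ≤ k →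
      nyBracket N (vsFR lam β N m) (vsFR mu β N m) = 0 ∧
      nyBracket N (vsFR lam β N m) (vsFR mu β N (m+1)) = vsE β N (N-1-m) lam mu m ∧
      C (lam - mu) * vsE β N (N-1-m) lam mu m
        = vsFR lam β N (m+1) * vsFR mu β N m - vsFR lam β N m * vsFR mu β N (m+1) ∧
      vsE β N (N-1-m) lam mu m = vsE β N (N-1-m) mu lam m := by
  intro k
  induction k with
  | zero =>
    intro m lam mu hm hk
    have hE : N - 1 - m = 0 := by omega
    rw [hE]
    rcases le_or_gt N m with hmN | hmN
    · have f1 : ∀ l : ℝ, vsFR l β N m = 1 := fun l => vsFR_one l β N m (by omega) hmN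
      have f2 : ∀ l : ℝ, vsFR l β N (m+1) = 1 := fun l => vsFR_one l β N (m+1) (by omega) (by omega)
      refine ⟨?_, ?_, ?_, rfl⟩
      · exact nyBracket_left_zero N _ (by rw [f1]; exact fun j => pderiv_one)
      · rw [nyBracket_right_zero N _ (by rw [f2]; exact fun j => pderiv_one)]
        simp [vsE]
      · rw [f1, f1, f2, f2]
        simp [vsE]
    · have hmeq : m = N - 1 := by omega
      subst hmeq
      have f1 : ∀ l : ℝ, vsFR l β N (N-1) = X (N-1) := fun l => vsFR_top l β N
      have f2 : ∀ l : ℝ, vsFR l β N (N-1+1) = 1 := fun l => vsFR_one l β N _ (by omega) (by omega)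
      refine ⟨?_, ?_, ?_, rfl⟩
      · rw [f1, f1]
        exact nyBracket_self N _
      · rw [nyBracket_right_zero N _ (by rw [f2]; exact fun j => pderiv_one)]
        simp [vsE]
      · rw [f1, f1, f2, f2]
        simp [vsE]
  | succ k ih =>
    intro m lam mu hm hk
    rcases le_or_gt (N - 1 - m) k with hk' | hk'
    · exact ih m lam mu hm hk'
    have hm2 : m + 2 ≤ N := by omega
    have hNm : N - 1 - m = k + 1 := by omega
    have hNm1 : N - 1 - (m+1) = k := by omega
    obtain ⟨ih1a, ih1b, ih1c, ih1d⟩ := ih (m+1) lam mu (by omega) (by omega)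
    obtain ⟨ih1a', ih1b', ih1c', ih1d'⟩ := ih (m+1) mu lam (by omega) (by omega)
    obtain ⟨ih2a, _, _, _⟩ := ih (m+2) lam mu (by omega) (by omega)
    rw [hNm1] at ih1b ih1c ih1d ih1b' ih1c' ih1d'
    have recF : vsFR lam β N m = X m * vsFR lam β N (m+1) + C (lam + β m) * vsFR lam β N (m+2) :=
      vsFR_rec lam β N m hm2
    have recF' : vsFR mu β N m = X m * vsFR mu β N (m+1) + C (mu + β m) * vsFR mu β N (m+2) :=
      vsFR_rec mu β N m hm2
    -- atomic brackets with X m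
    have hXG : ∀ l : ℝ, nyBracket N (X m) (vsFR l β N (m+1)) = - vsFR l β N (m+2) := by
      intro l
      rw [nyBracket_X_left hN hm (by omega) _ (vsFR_vars l β N (by omega))
        (vsFR_vars l β N (by omega)),
        vsFR_vars l β N (show m - 1 < m + 1 ∨ _ from Or.inl (by omega)),
        vsFR_pderiv_self l β N (m+1) (by omega) (by omega), zero_sub]
    have hXH : ∀ l : ℝ, nyBracket N (X m) (vsFR l β N (m+2)) = 0 := by
      intro l
      rw [nyBracket_X_left hN hm (by omega) _ (vsFR_vars l β N (by omega))
        (vsFR_vars l β N (by omega)),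
        vsFR_vars l β N (show m - 1 < m + 2 ∨ _ from Or.inl (by omega)),
        vsFR_vars l β N (show m + 1 < m + 2 ∨ _ from Or.inl (by omega)), sub_zero]
    have hXX : nyBracket N (X m) (X m) = 0 := nyBracket_self N _
    have hGX : nyBracket N (vsFR lam β N (m+1)) (X m) = vsFR lam β N (m+2) := by
      rw [nyBracket_swap, hXG, neg_neg]
    have hHX : nyBracket N (vsFR lam β N (m+2)) (X m) = 0 := by
      rw [nyBracket_swap, hXH, neg_zero]
    have hHG' : nyBracket N (vsFR lam β N (m+2)) (vsFR mu β N (m+1))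
        = - vsE β N k mu lam (m+1) := by
      rw [nyBracket_swap, ih1b']
    refine ⟨?_, ?_, ?_, ?_⟩
    · rw [recF, recF']
      simp only [nyBracket_add_left, nyBracket_add_right, nyBracket_C_mul_left,
        nyBracket_C_mul_right, nyBracket_mul_left, nyBracket_mul_right, nyBracket_C_left,
        nyBracket_C_right]
      rw [ih1a, ih1b, hHG', ih2a, hXG mu, hXH mu, hXX, hGX, hHX]
      rw [← ih1d]
      simp only [map_add, map_sub] at ih1c ⊢
      linear_combination (-(X m)) * ih1c
    · rw [hNm, recF]
      simp only [nyBracket_add_left, nyBracket_C_mul_left, nyBracket_mul_left, nyBracket_C_left]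
      rw [ih1a, hXG mu, hHG']
      show _ = -(vsFR lam β N (m+1) * vsFR mu β N (m+2)) - C (lam + β m) * vsE β N k mu lam (m+1)
      ring
    · rw [hNm]
      show C (lam - mu) * (-(vsFR lam β N (m+1) * vsFR mu β N (m+2))
          - C (lam + β m) * vsE β N k mu lam (m+1)) = _
      rw [recF, recF']
      simp only [map_add, map_sub] at ih1c' ⊢
      linear_combination (C lam + C (β m)) * ih1c'
    · rw [hNm]
      show -(vsFR lam β N (m+1) * vsFR mu β N (m+2)) - C (lam + β m) * vsE β N k mu lam (m+1)
        = -(vsFR mu β N (m+1) * vsFR lam β N (m+2)) - C (mu + β m) * vsE β N k lam mu (m+1)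
      rw [ih1d]
      simp only [map_add, map_sub] at ih1c ⊢
      rw [ih1d] at ih1c
      linear_combination - ih1c

end VSaux

/-- the polynomials F_m pairwise satisfy the Poisson relations
{F_{n+1}(λ), F_{n+1}(μ)} = 0, {F_{n+2}(λ), F_{n+2}(μ)} = 0 and
(λ − μ){F_{n+1}(λ), F_{n+2}(μ)} = F_{n+2}(λ) F_{n+1}(μ) − F_{n+1}(λ) F_{n+2}(μ). -/
theorem vsF_poisson_relations (N : ℕ) (hN : 4 ≤ N) (β : ℕ → ℝ)
    (n : ℕ) (hn : n ≤ N - 3) (lam mu : ℝ) :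
    nyBracket N (vsFR lam β N (n + 1)) (vsFR mu β N (n + 1)) = 0 ∧
    nyBracket N (vsFR lam β N (n + 2)) (vsFR mu β N (n + 2)) = 0 ∧
    MvPolynomial.C (lam - mu) * nyBracket N (vsFR lam β N (n + 1)) (vsFR mu β N (n + 2))
      = vsFR lam β N (n + 2) * vsFR mu β N (n + 1)
        - vsFR lam β N (n + 1) * vsFR mu β N (n + 2) := by
  obtain ⟨P1, P2, P3, _⟩ := VSaux.master hN β N (n+1) lam mu (by omega) (by omega)
  obtain ⟨Q1, _, _, _⟩ := VSaux.master hN β N (n+2) lam mu (by omega) (by omega)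
  exact ⟨P1, Q1, by rw [P2]; exact P3⟩
end

section
/- Fix g ≥ 1 and real constants b_0 ≠ 0 and ã_0. On the open set U ⊂ ℝ^{2g} of points (λ_1,...,λ_g, z_1,...,z_g) with the λ_j pairwise distinct, each λ_j ≠ 0, and each z_j ≠ 0, define for a real parameter λ the functions B(λ) = b_0 ∏_{j=1}^g (λ − λ_j) and Ã(λ) = ( ã_0/b_0 + Σ_{j=1}^g z_j / (B'(λ_j)(λ − λ_j) λ_j) ) · B(λ), where B'(λ_j) = ∂_λ B at λ_j. Define the Poisson bracket of smooth functions F, G on U by {F, G} = Σ_{j=1}^g z_j ( (∂F/∂λ_j)(∂G/∂z_j) − (∂F/∂z_j)(∂G/∂λ_j) ). Then for any real parameters λ, μ with λ ≠ μ and λ, μ not equal to any λ_j: {Ã(λ), Ã(μ)} = 0, {B(λ), B(μ)} = 0, and (λ − μ) {Ã(λ), B(μ)} = B(λ) Ã(μ) − Ã(λ) B(μ). -/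
/-- B(λ) = b₀ ∏_{j=1}^g (λ − λ_j), as a function of λ ∈ ℝ. -/
noncomputable def specBf (g : ℕ) (b0 : ℝ) (lam : Fin g → ℝ) (t : ℝ) : ℝ :=
  b0 * ∏ j : Fin g, (t - lam j)

/-- B'(λ_j), the λ-derivative of B at λ_j. -/
noncomputable def specBderiv (g : ℕ) (b0 : ℝ) (lam : Fin g → ℝ) (j : Fin g) : ℝ :=
  deriv (specBf g b0 lam) (lam j)

/-- Ã(λ) = (ã₀/b₀ + Σ_j z_j / (B'(λ_j)(λ − λ_j)λ_j)) B(λ). -/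
noncomputable def specAt (g : ℕ) (b0 a0 : ℝ) (lam z : Fin g → ℝ) (t : ℝ) : ℝ :=
  (a0 / b0 + ∑ j : Fin g, z j / (specBderiv g b0 lam j * (t - lam j) * lam j))
    * specBf g b0 lam t

/-- The Poisson bracket {F, G} = Σ_j z_j ((∂F/∂λ_j)(∂G/∂z_j) − (∂F/∂z_j)(∂G/∂λ_j))
of two functions of (λ_1,…,λ_g, z_1,…,z_g), evaluated at the point (lam, z). -/
noncomputable def specPB (g : ℕ) (F G : (Fin g → ℝ) → (Fin g → ℝ) → ℝ)
    (lam z : Fin g → ℝ) : ℝ :=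
  ∑ j : Fin g, z j *
    (deriv (fun u => F (Function.update lam j u) z) (lam j)
        * deriv (fun u => G lam (Function.update z j u)) (z j)
      - deriv (fun u => F lam (Function.update z j u)) (z j)
        * deriv (fun u => G (Function.update lam j u) z) (lam j))

open Finset

lemma sdq_diff_prod {g : ℕ} (s : Finset (Fin g)) (c : Fin g → ℝ) :
    Differentiable ℝ (fun u : ℝ => ∏ m ∈ s, (u - c m)) :=
  Differentiable.fun_finset_prod (fun i _ => differentiable_id.sub_const (c i))

lemma sdq_prod_sub_update {g : ℕ} (lam : Fin g → ℝ) (k : Fin g) (u σ : ℝ) :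
    ∏ m : Fin g, (σ - Function.update lam k u m)
      = (σ - u) * ∏ m ∈ Finset.univ.erase k, (σ - lam m) := by
  rw [← Finset.mul_prod_erase Finset.univ _ (Finset.mem_univ k), Function.update_self]
  congr 1
  exact Finset.prod_congr rfl fun m hm => by
    rw [Function.update_of_ne (Finset.ne_of_mem_erase hm)]

lemma sdq_specBderiv_eq {g : ℕ} (b0 : ℝ) (lam : Fin g → ℝ) (j : Fin g) :
    specBderiv g b0 lam j = b0 * ∏ m ∈ Finset.univ.erase j, (lam j - lam m) := by
  have hB : specBf g b0 lam
      = fun x => (b0 * (x - lam j)) * ∏ m ∈ Finset.univ.erase j, (x - lam m) := by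
    funext x
    rw [specBf, ← Finset.mul_prod_erase Finset.univ _ (Finset.mem_univ j)]
    ring
  have h1 : HasDerivAt (fun x : ℝ => b0 * (x - lam j)) b0 (lam j) := by
    simpa using (((hasDerivAt_id (lam j)).sub_const (lam j)).const_mul b0)
  have h2 : HasDerivAt (fun x : ℝ => ∏ m ∈ Finset.univ.erase j, (x - lam m))
      (deriv (fun x : ℝ => ∏ m ∈ Finset.univ.erase j, (x - lam m)) (lam j)) (lam j) :=
    ((sdq_diff_prod _ lam) (lam j)).hasDerivAt
  rw [specBderiv, hB, (h1.fun_mul h2).deriv]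
  simp

/-- The σ-independent factor in ∂Ã(σ)/∂λ_k. -/
noncomputable def specM (g : ℕ) (a0 : ℝ) (lam z : Fin g → ℝ) (k : Fin g) : ℝ :=
  (-a0 - z k * (deriv (fun u : ℝ => ∏ m ∈ Finset.univ.erase k, (u - lam m)) (lam k) * lam k
      + ∏ m ∈ Finset.univ.erase k, (lam k - lam m))
      / ((∏ m ∈ Finset.univ.erase k, (lam k - lam m)) ^ 2 * lam k ^ 2))
  + ∑ j ∈ Finset.univ.erase k, z j /
      ((lam j - lam k) ^ 2 * (∏ m ∈ (Finset.univ.erase j).erase k, (lam j - lam m)) * lam j)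

lemma sdq_deriv_At_lam {g : ℕ} (b0 a0 : ℝ) (hb0 : b0 ≠ 0) (lam z : Fin g → ℝ)
    (hinj : Function.Injective lam) (hlam0 : ∀ j, lam j ≠ 0)
    (k : Fin g) (σ : ℝ) (hσ : ∀ m, σ ≠ lam m) :
    deriv (fun u => specAt g b0 a0 (Function.update lam k u) z σ) (lam k)
      = (∏ m ∈ Finset.univ.erase k, (σ - lam m)) * specM g a0 lam z k := by
  have hPk : (∏ m ∈ Finset.univ.erase k, (lam k - lam m)) ≠ 0 :=
    Finset.prod_ne_zero_iff.mpr fun m hm =>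
      sub_ne_zero.mpr fun h => (Finset.ne_of_mem_erase hm) (hinj h.symm)
  have hσk : σ - lam k ≠ 0 := sub_ne_zero.mpr (hσ k)
  -- step 1 : explicit form of the function of u
  have key : (fun u => specAt g b0 a0 (Function.update lam k u) z σ)
      = fun u => a0 / b0 * (b0 * ((σ - u) * ∏ m ∈ Finset.univ.erase k, (σ - lam m)))
        + z k / (b0 * (∏ m ∈ Finset.univ.erase k, (u - lam m)) * (σ - u) * u)
            * (b0 * ((σ - u) * ∏ m ∈ Finset.univ.erase k, (σ - lam m)))
        + ∑ j ∈ Finset.univ.erase k,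
            z j / (b0 * ((lam j - u) * ∏ m ∈ (Finset.univ.erase j).erase k, (lam j - lam m))
                * (σ - lam j) * lam j)
              * (b0 * ((σ - u) * ∏ m ∈ Finset.univ.erase k, (σ - lam m))) := by
    funext u
    rw [specAt, specBf, sdq_prod_sub_update]
    rw [← Finset.add_sum_erase Finset.univ _ (Finset.mem_univ k)]
    have hk : ∏ m ∈ Finset.univ.erase k,
        (Function.update lam k u k - Function.update lam k u m)
        = ∏ m ∈ Finset.univ.erase k, (u - lam m) :=
      Finset.prod_congr rfl fun m hm => by
        rw [Function.update_self, Function.update_of_ne (Finset.ne_of_mem_erase hm)]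
    have hsum : ∑ j ∈ Finset.univ.erase k, z j / (specBderiv g b0 (Function.update lam k u) j
          * (σ - Function.update lam k u j) * Function.update lam k u j)
        = ∑ j ∈ Finset.univ.erase k,
            z j / (b0 * ((lam j - u) * ∏ m ∈ (Finset.univ.erase j).erase k, (lam j - lam m))
                * (σ - lam j) * lam j) := by
      refine Finset.sum_congr rfl fun j hj => ?_
      have hjk : j ≠ k := Finset.ne_of_mem_erase hj
      have hkj : k ∈ Finset.univ.erase j := by
        simp [Finset.mem_erase, hjk.symm]
      rw [sdq_specBderiv_eq, Function.update_of_ne hjk,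
        ← Finset.mul_prod_erase (Finset.univ.erase j) _ hkj, Function.update_self]
      have hin : ∏ m ∈ (Finset.univ.erase j).erase k,
          (lam j - Function.update lam k u m)
          = ∏ m ∈ (Finset.univ.erase j).erase k, (lam j - lam m) :=
        Finset.prod_congr rfl fun m hm => by
          rw [Function.update_of_ne (Finset.ne_of_mem_erase hm)]
      rw [hin]
    rw [hsum, sdq_specBderiv_eq, hk, Function.update_self]
    rw [add_mul, add_mul, Finset.sum_mul, ← add_assoc]
  rw [key]
  -- step 2 : derivatives of the three pieces
  have hT : HasDerivAt
      (fun u : ℝ => b0 * ((σ - u) * ∏ m ∈ Finset.univ.erase k, (σ - lam m)))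
      (b0 * (-1 * ∏ m ∈ Finset.univ.erase k, (σ - lam m))) (lam k) :=
    (((hasDerivAt_id (lam k)).const_sub σ).mul_const _).const_mul b0
  have h1 : HasDerivAt
      (fun u : ℝ => a0 / b0 * (b0 * ((σ - u) * ∏ m ∈ Finset.univ.erase k, (σ - lam m))))
      ((∏ m ∈ Finset.univ.erase k, (σ - lam m)) * (-a0)) (lam k) := by
    refine (hT.const_mul (a0 / b0)).congr_deriv ?_
    field_simp
    try ring
  have hP : HasDerivAt (fun u : ℝ => ∏ m ∈ Finset.univ.erase k, (u - lam m))
      (deriv (fun u : ℝ => ∏ m ∈ Finset.univ.erase k, (u - lam m)) (lam k)) (lam k) :=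
    ((sdq_diff_prod _ lam) (lam k)).hasDerivAt
  have hden : HasDerivAt
      (fun u : ℝ => b0 * (∏ m ∈ Finset.univ.erase k, (u - lam m)) * (σ - u) * u)
      (((b0 * deriv (fun u : ℝ => ∏ m ∈ Finset.univ.erase k, (u - lam m)) (lam k))
          * (σ - lam k)
        + b0 * (∏ m ∈ Finset.univ.erase k, (lam k - lam m)) * -1) * lam k
        + b0 * (∏ m ∈ Finset.univ.erase k, (lam k - lam m)) * (σ - lam k) * 1) (lam k) := by
    have := ((hP.const_mul b0).fun_mul ((hasDerivAt_id (lam k)).const_sub σ)).fun_mul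
      (hasDerivAt_id (lam k))
    refine this.congr_deriv ?_
    try simp
  have hdenne : b0 * (∏ m ∈ Finset.univ.erase k, (lam k - lam m)) * (σ - lam k) * lam k ≠ 0 :=
    mul_ne_zero (mul_ne_zero (mul_ne_zero hb0 hPk) hσk) (hlam0 k)
  have h2 : HasDerivAt
      (fun u : ℝ => z k / (b0 * (∏ m ∈ Finset.univ.erase k, (u - lam m)) * (σ - u) * u)
        * (b0 * ((σ - u) * ∏ m ∈ Finset.univ.erase k, (σ - lam m))))
      ((∏ m ∈ Finset.univ.erase k, (σ - lam m)) *
        (-(z k * (deriv (fun u : ℝ => ∏ m ∈ Finset.univ.erase k, (u - lam m)) (lam k) * lam k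
            + ∏ m ∈ Finset.univ.erase k, (lam k - lam m))
          / ((∏ m ∈ Finset.univ.erase k, (lam k - lam m)) ^ 2 * lam k ^ 2)))) (lam k) := by
    have hq := ((hasDerivAt_const (lam k) (z k)).fun_div hden hdenne).fun_mul hT
    have hlk := hlam0 k
    refine hq.congr_deriv ?_
    field_simp
    try ring
  have h3 : HasDerivAt
      (fun u : ℝ => ∑ j ∈ Finset.univ.erase k,
          z j / (b0 * ((lam j - u) * ∏ m ∈ (Finset.univ.erase j).erase k, (lam j - lam m))
              * (σ - lam j) * lam j)
            * (b0 * ((σ - u) * ∏ m ∈ Finset.univ.erase k, (σ - lam m))))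
      (∑ j ∈ Finset.univ.erase k,
        (∏ m ∈ Finset.univ.erase k, (σ - lam m)) *
          (z j / ((lam j - lam k) ^ 2
            * (∏ m ∈ (Finset.univ.erase j).erase k, (lam j - lam m)) * lam j))) (lam k) := by
    refine HasDerivAt.fun_sum fun j hj => ?_
    have hjk : j ≠ k := Finset.ne_of_mem_erase hj
    have hjkne : lam j - lam k ≠ 0 := sub_ne_zero.mpr fun h => hjk (hinj h)
    have hR : (∏ m ∈ (Finset.univ.erase j).erase k, (lam j - lam m)) ≠ 0 :=
      Finset.prod_ne_zero_iff.mpr fun m hm => sub_ne_zero.mpr fun h =>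
        (Finset.ne_of_mem_erase (Finset.mem_of_mem_erase hm)) (hinj h.symm)
    have hσj : σ - lam j ≠ 0 := sub_ne_zero.mpr (hσ j)
    have hdj : HasDerivAt
        (fun u : ℝ => b0 * ((lam j - u) * ∏ m ∈ (Finset.univ.erase j).erase k, (lam j - lam m))
            * (σ - lam j) * lam j)
        (b0 * (-1 * ∏ m ∈ (Finset.univ.erase j).erase k, (lam j - lam m))
          * (σ - lam j) * lam j) (lam k) :=
      (((((hasDerivAt_id (lam k)).const_sub (lam j)).mul_const _).const_mul b0).mul_const
        _).mul_const _
    have hdjne : b0 * ((lam j - lam k) * ∏ m ∈ (Finset.univ.erase j).erase k, (lam j - lam m))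
        * (σ - lam j) * lam j ≠ 0 :=
      mul_ne_zero (mul_ne_zero (mul_ne_zero hb0 (mul_ne_zero hjkne hR)) hσj) (hlam0 j)
    have hq := ((hasDerivAt_const (lam k) (z j)).fun_div hdj hdjne).fun_mul hT
    have hlj := hlam0 j
    refine hq.congr_deriv ?_
    field_simp
    try ring
  have H := (h1.add h2).add h3
  refine H.deriv.trans ?_
  rw [← Finset.mul_sum, specM]
  ring

lemma sdq_deriv_Bf_lam {g : ℕ} (b0 : ℝ) (lam : Fin g → ℝ) (k : Fin g) (σ : ℝ) :
    deriv (fun u => specBf g b0 (Function.update lam k u) σ) (lam k)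
      = -(b0 * ∏ m ∈ Finset.univ.erase k, (σ - lam m)) := by
  have hB : (fun u => specBf g b0 (Function.update lam k u) σ)
      = fun u => b0 * ((σ - u) * ∏ m ∈ Finset.univ.erase k, (σ - lam m)) := by
    funext u; rw [specBf, sdq_prod_sub_update]
  rw [hB]
  have h : HasDerivAt
      (fun u : ℝ => b0 * ((σ - u) * ∏ m ∈ Finset.univ.erase k, (σ - lam m)))
      (b0 * (-1 * ∏ m ∈ Finset.univ.erase k, (σ - lam m))) (lam k) :=
    HasDerivAt.const_mul b0
      (((hasDerivAt_id (lam k)).const_sub σ).mul_const _)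
  rw [h.deriv]; ring

lemma sdq_deriv_At_z {g : ℕ} (b0 a0 : ℝ) (lam z : Fin g → ℝ) (k : Fin g) (σ : ℝ) :
    deriv (fun u => specAt g b0 a0 lam (Function.update z k u) σ) (z k)
      = specBf g b0 lam σ / (specBderiv g b0 lam k * (σ - lam k) * lam k) := by
  have hA : (fun u => specAt g b0 a0 lam (Function.update z k u) σ)
      = fun u => (a0 / b0 + (u / (specBderiv g b0 lam k * (σ - lam k) * lam k)
          + ∑ j ∈ Finset.univ.erase k, z j / (specBderiv g b0 lam j * (σ - lam j) * lam j)))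
          * specBf g b0 lam σ := by
    funext u
    rw [specAt]
    congr 2
    have h1 : ∀ j : Fin g, Function.update z k u j / (specBderiv g b0 lam j * (σ - lam j) * lam j)
        = Function.update (fun j => z j / (specBderiv g b0 lam j * (σ - lam j) * lam j)) k
            (u / (specBderiv g b0 lam k * (σ - lam k) * lam k)) j := by
      intro j
      rcases eq_or_ne j k with h | h
      · subst h; simp
      · simp [Function.update_of_ne h]
    rw [Finset.sum_congr rfl (fun j _ => h1 j)]
    rw [Finset.sum_update_of_mem (Finset.mem_univ k)]
    congr 1
    rw [Finset.sdiff_singleton_eq_erase]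
  rw [hA]
  have h : HasDerivAt (fun u : ℝ => (a0 / b0 + (u / (specBderiv g b0 lam k * (σ - lam k) * lam k)
      + ∑ j ∈ Finset.univ.erase k, z j / (specBderiv g b0 lam j * (σ - lam j) * lam j)))
      * specBf g b0 lam σ)
      (1 / (specBderiv g b0 lam k * (σ - lam k) * lam k) * specBf g b0 lam σ) (z k) := by
    exact ((((hasDerivAt_id (z k)).div_const _).add_const _).const_add _).mul_const _
  rw [h.deriv]; ring

/-- the quadratic Poisson algebra of Ã and B:
{Ã(λ), Ã(μ)} = 0, {B(λ), B(μ)} = 0 and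
(λ − μ){Ã(λ), B(μ)} = B(λ)Ã(μ) − Ã(λ)B(μ). -/
theorem spectral_darboux_quadratic_poisson_algebra (g : ℕ) (hg : 1 ≤ g)
    (b0 a0 : ℝ) (hb0 : b0 ≠ 0)
    (lam z : Fin g → ℝ) (hinj : Function.Injective lam)
    (hlam0 : ∀ j, lam j ≠ 0) (hz : ∀ j, z j ≠ 0)
    (s t : ℝ) (hst : s ≠ t) (hs : ∀ j, s ≠ lam j) (ht : ∀ j, t ≠ lam j) :
    specPB g (fun l w => specAt g b0 a0 l w s) (fun l w => specAt g b0 a0 l w t) lam z = 0 ∧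
    specPB g (fun l _ => specBf g b0 l s) (fun l _ => specBf g b0 l t) lam z = 0 ∧
    (s - t) * specPB g (fun l w => specAt g b0 a0 l w s) (fun l _ => specBf g b0 l t) lam z
      = specBf g b0 lam s * specAt g b0 a0 lam z t
        - specAt g b0 a0 lam z s * specBf g b0 lam t := by
  have hDne : ∀ j : Fin g, specBderiv g b0 lam j ≠ 0 := by
    intro j
    rw [sdq_specBderiv_eq]
    exact mul_ne_zero hb0 (Finset.prod_ne_zero_iff.mpr fun m hm =>
      sub_ne_zero.mpr fun h => (Finset.ne_of_mem_erase hm) (hinj h.symm))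
  have hBs : ∀ j : Fin g, specBf g b0 lam s
      = b0 * ((s - lam j) * ∏ m ∈ Finset.univ.erase j, (s - lam m)) := by
    intro j
    rw [specBf, ← Finset.mul_prod_erase Finset.univ _ (Finset.mem_univ j)]
  have hBt : ∀ j : Fin g, specBf g b0 lam t
      = b0 * ((t - lam j) * ∏ m ∈ Finset.univ.erase j, (t - lam m)) := by
    intro j
    rw [specBf, ← Finset.mul_prod_erase Finset.univ _ (Finset.mem_univ j)]
  refine ⟨?_, ?_, ?_⟩
  · -- {Ã(s), Ã(t)} = 0
    simp only [specPB]
    refine Finset.sum_eq_zero fun j _ => ?_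
    rw [sdq_deriv_At_lam b0 a0 hb0 lam z hinj hlam0 j s hs,
      sdq_deriv_At_lam b0 a0 hb0 lam z hinj hlam0 j t ht,
      sdq_deriv_At_z, sdq_deriv_At_z]
    have h1 : s - lam j ≠ 0 := sub_ne_zero.mpr (hs j)
    have h2 : t - lam j ≠ 0 := sub_ne_zero.mpr (ht j)
    have h3 := hlam0 j
    have h4 := hDne j
    rw [hBs j, hBt j]
    field_simp
    try ring
  · -- {B(s), B(t)} = 0
    simp only [specPB]
    refine Finset.sum_eq_zero fun j _ => ?_
    simp
  · -- (s − t){Ã(s), B(t)} = B(s)Ã(t) − Ã(s)B(t)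
    simp only [specPB]
    rw [Finset.mul_sum]
    have hR : specBf g b0 lam s * specAt g b0 a0 lam z t
        - specAt g b0 a0 lam z s * specBf g b0 lam t
        = ∑ j : Fin g,
            (z j / (specBderiv g b0 lam j * (t - lam j) * lam j)
                * (specBf g b0 lam s * specBf g b0 lam t)
              - z j / (specBderiv g b0 lam j * (s - lam j) * lam j)
                * (specBf g b0 lam s * specBf g b0 lam t)) := by
      rw [specAt, specAt, Finset.sum_sub_distrib, ← Finset.sum_mul, ← Finset.sum_mul]
      ring
    rw [hR]
    refine Finset.sum_congr rfl fun j _ => ?_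
    have h1 : s - lam j ≠ 0 := sub_ne_zero.mpr (hs j)
    have h2 : t - lam j ≠ 0 := sub_ne_zero.mpr (ht j)
    have h3 := hlam0 j
    have h4 := hDne j
    simp only [deriv_const', mul_zero, zero_sub]
    rw [sdq_deriv_At_z, sdq_deriv_Bf_lam, hBt j]
    field_simp
    ring
end
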